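/- arXiv:math/0302314 — 3 statements merged into one kernel-verified Lean document; each statement's English description precedes it below -/
import Mathlib

section
/- Let a₀, a₁, a₂ ∈ ℂ. Define, for a formal weight-2 vector v = a₀w₀ + a₁w₁ + a₂w₂, the products v ∗₁ v = Σᵢ 8aᵢ² wᵢ + Σ_{i≠j} aᵢaⱼ(wᵢ + wⱼ − w_k) (where {i,j,k} = {0,1,2}) and v ∗₃ v = (4Σᵢ aᵢ² + (1/2)Σ_{i≠j} aᵢaⱼ)·𝟙, in the free module with basis w₀, w₁, w₂, 𝟙. Then the conditions v ∗₁ v = 2v and v ∗₃ v = (1/4)𝟙 hold if and only if (a₀,a₁,a₂) is one of (1/4,0,0), (0,1/4,0), (0,0,1/4). -/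
/-- Classification of conformal vectors of central charge `1/2` in `M ⊂ V_{√2A₂}`:
for `v = a₀w₀ + a₁w₁ + a₂w₂` with products
`wᵢ ∗₁ wⱼ = 8wᵢ` (`i = j`), `wᵢ + wⱼ - w_k` (`i ≠ j`) and
`wᵢ ∗₃ wⱼ = 4·𝟙` (`i = j`), `(1/2)·𝟙` (`i ≠ j`), the conditions
`v ∗₁ v = 2v` and `v ∗₃ v = (1/4)𝟙` hold iff
`(a₀,a₁,a₂) ∈ {(1/4,0,0), (0,1/4,0), (0,0,1/4)}`.
(Here `v ∗₁ v` is recorded by its coordinates in the basis `w₀, w₁, w₂` and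
`v ∗₃ v` by its coefficient of `𝟙`.) -/
theorem conformal_vectors_classification
    (star1 : (Fin 3 → ℂ) → Fin 3 → ℂ)
    (hstar1 : ∀ a : Fin 3 → ℂ, star1 a =
      ![8 * a 0 ^ 2 + 2 * a 0 * a 1 + 2 * a 0 * a 2 - 2 * a 1 * a 2,
        8 * a 1 ^ 2 + 2 * a 0 * a 1 + 2 * a 1 * a 2 - 2 * a 0 * a 2,
        8 * a 2 ^ 2 + 2 * a 0 * a 2 + 2 * a 1 * a 2 - 2 * a 0 * a 1])
    (star3 : (Fin 3 → ℂ) → ℂ)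
    (hstar3 : ∀ a : Fin 3 → ℂ, star3 a =
      4 * (a 0 ^ 2 + a 1 ^ 2 + a 2 ^ 2) + (a 0 * a 1 + a 0 * a 2 + a 1 * a 2)) :
    ∀ a : Fin 3 → ℂ,
      (star1 a = (2 : ℂ) • a ∧ star3 a = 1/4) ↔
        (a = ![1/4, 0, 0] ∨ a = ![0, 1/4, 0] ∨ a = ![0, 0, 1/4]) := by
  intro a
  constructor
  · rintro ⟨h1, h3⟩
    rw [hstar1] at h1
    rw [hstar3] at h3
    have e0 := congrFun h1 0
    have e1 := congrFun h1 1
    have e2 := congrFun h1 2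
    simp only [Matrix.cons_val_zero, Matrix.cons_val_one, Matrix.head_cons,
      Matrix.cons_val_two, Matrix.tail_cons, Pi.smul_apply, smul_eq_mul] at e0 e1 e2
    have hs : a 0 + a 1 + a 2 = 1/4 := by linear_combination (2*h3 - e0 - e1 - e2)/2
    have hz : (a 0 - a 1) * a 2 = 0 := by
      linear_combination (-e0 + e1)/4 + 2*(a 0 - a 1)*hs
    have hx : (a 1 - a 2) * a 0 = 0 := by
      linear_combination (-e1 + e2)/4 + 2*(a 1 - a 2)*hs
    have hy : (a 0 - a 2) * a 1 = 0 := by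
      linear_combination (-e0 + e2)/4 + 2*(a 0 - a 2)*hs
    rcases mul_eq_zero.mp hz with hxy | hz0
    · rcases mul_eq_zero.mp hx with hyz | hx0
      · exfalso
        have h0 : a 0 = 1/12 := by linear_combination hs/3 + (2/3)*hxy + (1/3)*hyz
        have h1' : a 1 = 1/12 := by linear_combination hs/3 - (1/3)*hxy + (1/3)*hyz
        have h2 : a 2 = 1/12 := by linear_combination hs/3 - (1/3)*hxy - (2/3)*hyz
        rw [h0, h1', h2] at e0
        norm_num at e0
      · -- a 0 = 0, hence a 1 = 0 and a 2 = 1/4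
        have h0 : a 0 = 0 := hx0
        have h1' : a 1 = 0 := by linear_combination hx0 - hxy
        have h2 : a 2 = 1/4 := by linear_combination hs - h0 - h1'
        right; right
        funext i; fin_cases i <;> simp [h0, h1', h2]
    · rcases mul_eq_zero.mp hy with hxz | hy0
      · -- a 2 = 0 and a 0 = a 2 = 0, so a 1 = 1/4
        have h0 : a 0 = 0 := by linear_combination hxz + hz0
        have h2 : a 2 = 0 := hz0
        have h1' : a 1 = 1/4 := by linear_combination hs - h0 - h2
        right; left
        funext i; fin_cases i <;> simp [h0, h1', h2]
      · -- a 1 = 0, a 2 = 0, so a 0 = 1/4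
        have h1' : a 1 = 0 := hy0
        have h2 : a 2 = 0 := hz0
        have h0 : a 0 = 1/4 := by linear_combination hs - h1' - h2
        left
        funext i; fin_cases i <;> simp [h0, h1', h2]
  · rintro (rfl | rfl | rfl) <;>
      refine ⟨?_, ?_⟩ <;>
        first
          | (rw [hstar1]; funext i; fin_cases i <;> norm_num [Matrix.cons_val_two, Matrix.tail_cons, Matrix.head_cons])
          | (rw [hstar3]; norm_num [Matrix.cons_val_two, Matrix.tail_cons, Matrix.head_cons])
end

section
/- Let R be a commutative ring containing ℚ, and let ω, J ∈ R satisfy the three relations: (i) −(59680000/3501)ω⁶ − (184400/1167)ω³J² + J⁴ = 0; (ii) −926640·ω²J³ − 89856000·ω⁵J = 0; (iii) 21565440000·ω⁷ − 680659200·ω⁴J² − 5559840·ωJ⁴ = 0. Then ω⁸ = 0, ω²J⁴ = 0, ω⁵J² = 0, and J⁸ = 0. Consequently the subring ℚ[ω, J] ⊆ R is spanned over ℚ by the monomials ω^p J^q with 0 ≤ p, q ≤ 7. -/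
/-- The nilpotency step in the proof of `C₂`-cofiniteness of the `W₃` algebra of
central charge `6/5`: in a commutative `ℚ`-algebra, the three relations coming from
the singular vector `𝐯¹²` force `ω⁸ = ω²J⁴ = ω⁵J² = J⁸ = 0`, so that `ℚ[ω,J]` is
spanned by the monomials `ω^p J^q` with `0 ≤ p, q ≤ 7`. -/
theorem c2_cofiniteness_nilpotency
    (R : Type*) [CommRing R] [Algebra ℚ R] (ω J : R)
    (h1 : -(((59680000 : ℚ) / 3501) • ω ^ 6) - ((184400 : ℚ) / 1167) • (ω ^ 3 * J ^ 2)
      + J ^ 4 = 0)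
    (h2 : -((926640 : ℚ) • (ω ^ 2 * J ^ 3)) - (89856000 : ℚ) • (ω ^ 5 * J) = 0)
    (h3 : (21565440000 : ℚ) • ω ^ 7 - (680659200 : ℚ) • (ω ^ 4 * J ^ 2)
      - (5559840 : ℚ) • (ω * J ^ 4) = 0) :
    ω ^ 8 = 0 ∧ ω ^ 2 * J ^ 4 = 0 ∧ ω ^ 5 * J ^ 2 = 0 ∧ J ^ 8 = 0 ∧
    (Algebra.adjoin ℚ ({ω, J} : Set R)).toSubmodule ≤
      Submodule.span ℚ {m : R | ∃ p q : ℕ, p ≤ 7 ∧ q ≤ 7 ∧ m = ω ^ p * J ^ q} := by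
  -- turn a rational scalar into a cast numeral after clearing denominators
  have key : ∀ (a : ℚ) (n m : ℕ) (x : R), (n : ℚ) * a = (m : ℚ) →
      (n : R) * (a • x) = (m : R) * x := by
    intro a n m x h
    rw [Algebra.smul_def, ← map_natCast (algebraMap ℚ R) n, ← mul_assoc, ← map_mul, h,
      map_natCast]
  have k1 := key ((59680000 : ℚ) / 3501) 3501 59680000 (ω ^ 6) (by norm_num)
  have k2 := key ((184400 : ℚ) / 1167) 3501 553200 (ω ^ 3 * J ^ 2) (by norm_num)
  have e1 : -(59680000 : R) * ω ^ 6 - 553200 * (ω ^ 3 * J ^ 2) + 3501 * J ^ 4 = 0 := by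
    push_cast at k1 k2
    linear_combination (3501 : R) * h1 + k1 + k2
  have k3 := key (926640 : ℚ) 1 926640 (ω ^ 2 * J ^ 3) (by norm_num)
  have k4 := key (89856000 : ℚ) 1 89856000 (ω ^ 5 * J) (by norm_num)
  have e2 : -(926640 : R) * (ω ^ 2 * J ^ 3) - 89856000 * (ω ^ 5 * J) = 0 := by
    push_cast at k3 k4
    linear_combination h2 + k3 + k4
  have k5 := key (21565440000 : ℚ) 1 21565440000 (ω ^ 7) (by norm_num)
  have k6 := key (680659200 : ℚ) 1 680659200 (ω ^ 4 * J ^ 2) (by norm_num)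
  have k7 := key (5559840 : ℚ) 1 5559840 (ω * J ^ 4) (by norm_num)
  have e3 : (21565440000 : R) * ω ^ 7 - 680659200 * (ω ^ 4 * J ^ 2)
      - 5559840 * (ω * J ^ 4) = 0 := by
    push_cast at k5 k6 k7
    linear_combination h3 - k5 + k6 + k7
  -- dividing by a nonzero natural number
  have div : ∀ (n : ℕ) (x : R), (n : ℚ) ≠ 0 → (n : R) * x = 0 → x = 0 := by
    intro n x hn h
    have hcast : ((n : ℚ)) • x = (n : R) * x := by rw [Algebra.smul_def, map_natCast]
    have h2 : ((n : ℚ)⁻¹ * (n : ℚ)) • x = 0 := by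
      rw [mul_smul, hcast, h, smul_zero]
    rwa [inv_mul_cancel₀ hn, one_smul] at h2
  have hw8 : ω ^ 8 = 0 := by
    apply div 181351872000000 _ (by norm_num)
    push_cast
    linear_combination (-926640 * ω ^ 2) * e1 + (-38571 * J) * e2 + (5845 * ω) * e3
  have hw2J4 : ω ^ 2 * J ^ 4 = 0 := by
    apply div 71407299600 _ (by norm_num)
    push_cast
    linear_combination (5391360 * ω ^ 2) * e1 + (-146211 * J) * e2 + (14920 * ω) * e3
  have hw5J2 : ω ^ 5 * J ^ 2 = 0 := by
    apply div 9520973280000 _ (by norm_num)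
    push_cast
    linear_combination (-7413120 * ω ^ 2) * e1 + (95082 * J) * e2 + (-20515 * ω) * e3
  have hJ8 : J ^ 8 = 0 := by
    apply div 2189812482 _ (by norm_num)
    push_cast
    linear_combination (625482 * J ^ 4) * e1
      + (-2490000 * (ω ^ 4 * J) - 311160 * (ω * J ^ 3)) * e2
      + (-10375 * (ω ^ 2 * J ^ 2)) * e3
  refine ⟨hw8, hw2J4, hw5J2, hJ8, ?_⟩
  -- the span part
  set S : Set R := {m : R | ∃ p q : ℕ, p ≤ 7 ∧ q ≤ 7 ∧ m = ω ^ p * J ^ q} with hS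
  have hone : (1 : R) ∈ Submodule.span ℚ S :=
    Submodule.subset_span ⟨0, 0, by norm_num, by norm_num, by simp⟩
  have hωpow : ∀ n : ℕ, 8 ≤ n → (ω : R) ^ n = 0 := by
    intro n hn
    rw [← Nat.add_sub_cancel' hn, pow_add, hw8, zero_mul]
  have hJpow : ∀ n : ℕ, 8 ≤ n → (J : R) ^ n = 0 := by
    intro n hn
    rw [← Nat.add_sub_cancel' hn, pow_add, hJ8, zero_mul]
  have hSmul : ∀ a ∈ S, ∀ b ∈ S, a * b ∈ Submodule.span ℚ S := by
    rintro _ ⟨p, q, hp, hq, rfl⟩ _ ⟨p', q', hp', hq', rfl⟩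
    by_cases hc : p + p' ≤ 7 ∧ q + q' ≤ 7
    · exact Submodule.subset_span ⟨p + p', q + q', hc.1, hc.2, by ring⟩
    · have hz : ω ^ p * J ^ q * (ω ^ p' * J ^ q') = 0 := by
        rcases not_and_or.1 hc with hc | hc
        · have : ω ^ (p + p') = 0 := hωpow _ (by omega)
          calc ω ^ p * J ^ q * (ω ^ p' * J ^ q') = ω ^ (p + p') * (J ^ q * J ^ q') := by
                rw [pow_add]; ring
            _ = 0 := by rw [this, zero_mul]
        · have : J ^ (q + q') = 0 := hJpow _ (by omega)
          calc ω ^ p * J ^ q * (ω ^ p' * J ^ q') = J ^ (q + q') * (ω ^ p * ω ^ p') := by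
                rw [pow_add]; ring
            _ = 0 := by rw [this, zero_mul]
      rw [hz]
      exact Submodule.zero_mem _
  have hmul : ∀ x y : R, x ∈ Submodule.span ℚ S → y ∈ Submodule.span ℚ S →
      x * y ∈ Submodule.span ℚ S := by
    intro x y hx hy
    have hle : Submodule.span ℚ S * Submodule.span ℚ S ≤ Submodule.span ℚ S := by
      rw [Submodule.span_mul_span]
      refine Submodule.span_le.2 ?_
      rintro _ ⟨a, ha, b, hb, rfl⟩
      exact hSmul a ha b hb
    exact hle (Submodule.mul_mem_mul hx hy)
  let T : Subalgebra ℚ R := (Submodule.span ℚ S).toSubalgebra hone hmul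
  have hadj : Algebra.adjoin ℚ ({ω, J} : Set R) ≤ T := by
    refine Algebra.adjoin_le ?_
    rintro x (rfl | rfl)
    · exact Submodule.subset_span ⟨1, 0, by norm_num, by norm_num, by simp⟩
    · exact Submodule.subset_span ⟨0, 1, by norm_num, by norm_num, by simp⟩
  intro x hx
  exact hadj hx
end

section
/- Let u¹ = w₁ + ξ²w₂ + ξw₀ and u² = w₁ + ξw₂ + ξ²w₀ in the free ℂ-module with basis w₀, w₁, w₂, where ξ = exp(2π√−1/3), and let τ be the linear map cyclically permuting w₁ → w₂ → w₀ → w₁, and σ the map swapping w₁ ↔ w₂ and fixing w₀. Then τu¹ = ξu¹, τu² = ξ²u², and σu¹ = ξ²u². Moreover, defining the symmetric bilinear product w_i ∗ w_j = 8w_i if i = j and w_i + w_j − w_k if i ≠ j (with {i,j,k} = {0,1,2}), one has u¹ ∗ u¹ = 4u² and (u¹ ∗ u¹) ∗ u¹ = 140·ω, where ω = (1/5)(w₀ + w₁ + w₂). -/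
open Complex

/-- The weight-2 structure of `M ⊂ V_{√2A₂}`, in coordinates with respect to the basis
`w₀, w₁, w₂`: with `ξ = e^{2πi/3}`, `u¹ = w₁ + ξ²w₂ + ξw₀`, `u² = w₁ + ξw₂ + ξ²w₀`,
the cyclic map `τ : w₁ → w₂ → w₀ → w₁` and swap `σ : w₁ ↔ w₂`, and the symmetric
bilinear product `wᵢ ∗ wⱼ = 8wᵢ` (`i = j`), `wᵢ + wⱼ - w_k` (`i ≠ j`), one has
`τu¹ = ξu¹`, `τu² = ξ²u²`, `σu¹ = ξ²u²`, `u¹ ∗ u¹ = 4u²` and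
`(u¹ ∗ u¹) ∗ u¹ = 140ω` where `ω = (1/5)(w₀+w₁+w₂)`. -/
theorem weight_two_generators
    (ξ : ℂ) (hξ : ξ = Complex.exp (2 * Real.pi * I / 3))
    (w : Fin 3 → Fin 3 → ℂ) (hw : ∀ i, w i = Pi.single i 1)
    (τ σ : (Fin 3 → ℂ) → (Fin 3 → ℂ))
    (hτ : ∀ a : Fin 3 → ℂ, τ a = ![a 2, a 0, a 1])
    (hσ : ∀ a : Fin 3 → ℂ, σ a = ![a 0, a 2, a 1])
    (mul : (Fin 3 → ℂ) → (Fin 3 → ℂ) → (Fin 3 → ℂ))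
    (hmul : ∀ a b : Fin 3 → ℂ, mul a b =
      ![8 * a 0 * b 0 + (a 0 * b 1 + a 1 * b 0) + (a 0 * b 2 + a 2 * b 0)
          - (a 1 * b 2 + a 2 * b 1),
        8 * a 1 * b 1 + (a 0 * b 1 + a 1 * b 0) + (a 1 * b 2 + a 2 * b 1)
          - (a 0 * b 2 + a 2 * b 0),
        8 * a 2 * b 2 + (a 0 * b 2 + a 2 * b 0) + (a 1 * b 2 + a 2 * b 1)
          - (a 0 * b 1 + a 1 * b 0)])
    (u₁ u₂ ω : Fin 3 → ℂ)
    (hu₁ : u₁ = w 1 + ξ ^ 2 • w 2 + ξ • w 0)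
    (hu₂ : u₂ = w 1 + ξ • w 2 + ξ ^ 2 • w 0)
    (hω : ω = (1/5 : ℂ) • (w 0 + w 1 + w 2)) :
    τ u₁ = ξ • u₁ ∧ τ u₂ = ξ ^ 2 • u₂ ∧ σ u₁ = ξ ^ 2 • u₂ ∧
    mul u₁ u₁ = (4 : ℂ) • u₂ ∧ mul (mul u₁ u₁) u₁ = (140 : ℂ) • ω := by
  have h3 : ξ ^ 3 = 1 := by
    rw [hξ, ← Complex.exp_nat_mul]
    rw [show ((3 : ℕ) : ℂ) * (2 * Real.pi * I / 3) = 2 * Real.pi * I by push_cast; ring]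
    exact Complex.exp_two_pi_mul_I
  have hne : ξ ≠ 1 := by
    have h : ξ.im = Real.sin (2 * Real.pi / 3) := by
      rw [hξ, show (2 * Real.pi * I / 3 : ℂ) = (↑(2 * Real.pi / 3)) * I by push_cast; ring,
        Complex.exp_ofReal_mul_I_im]
    intro h1
    rw [h1] at h
    have : Real.sin (2 * Real.pi / 3) > 0 := by
      apply Real.sin_pos_of_pos_of_lt_pi <;> nlinarith [Real.pi_pos]
    simp at h
    linarith
  have hs : ξ ^ 2 + ξ + 1 = 0 := by
    have : (ξ - 1) * (ξ ^ 2 + ξ + 1) = 0 := by linear_combination h3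
    rcases mul_eq_zero.mp this with h | h
    · exact absurd (sub_eq_zero.mp h) hne
    · exact h
  subst hu₁ hu₂ hω
  simp only [hw] at *
  refine ⟨?_, ?_, ?_, ?_, ?_⟩ <;>
  · funext i
    fin_cases i <;>
      simp [hτ, hσ, hmul, Pi.single, Function.update] <;>
      ring_nf <;>
      first
        | linear_combination -h3
        | linear_combination -ξ*h3
        | linear_combination 2*ξ*hs
        | linear_combination 2*hs - 2*h3
        | linear_combination 8*ξ*h3 + 2*ξ*hs
        | linear_combination (52+12*ξ+12*ξ^2)*h3 + 24*hs
        | linear_combination (-12-12*ξ^2)*h3 + 24*hs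
        | linear_combination (-12+36*ξ+24*ξ^2+64*(ξ^3+1))*h3 + 24*hs
end
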